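/- arXiv:1207.1305 — 4 statements merged into one kernel-verified Lean document; each statement's English description precedes it below -/
import Mathlib

section
/- If 0 < t₁ < θ_c < t₂ < 2π and f(t₁) ≥ f(t₂), then t₁ + t₂ > 2θ_c > 6π/5, where θ_c is the unique critical point of f in (0, π). -/
open Real Set

noncomputable def f (x : ℝ) : ℝ := Real.sin x * (1 - 1 / (8 * Real.sin (x/2)^3))

noncomputable def phi (x : ℝ) : ℝ := (2 - Real.sin (x/2)^2) / (8 * Real.sin (x/2)^3)
noncomputable def phi1 (x : ℝ) : ℝ :=
  Real.cos (x/2) * (Real.sin (x/2)^2 - 6) / (16 * Real.sin (x/2)^4)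
noncomputable def phi2 (x : ℝ) : ℝ :=
  (Real.sin (x/2)^4 - 20*Real.sin (x/2)^2 + 24) / (32 * Real.sin (x/2)^5)

lemma sin_half_pos {x : ℝ} (h0 : 0 < x) (h2 : x < 2*π) : 0 < Real.sin (x/2) :=
  Real.sin_pos_of_pos_of_lt_pi (by linarith) (by linarith)

lemma hasDerivAt_f {x : ℝ} (h0 : 0 < x) (h2 : x < 2*π) :
    HasDerivAt f (Real.cos x + phi x) x := by
  have hs : 0 < Real.sin (x/2) := sin_half_pos h0 h2
  have hs3 : (8 : ℝ) * Real.sin (x/2)^3 ≠ 0 := by positivity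
  have hhalf : HasDerivAt (fun y : ℝ => Real.sin (y/2)) (Real.cos (x/2) * (1/2)) x :=
    (Real.hasDerivAt_sin (x/2)).comp (h₂ := Real.sin) x ((hasDerivAt_id x).div_const 2)
  have hden : HasDerivAt (fun y : ℝ => 8 * Real.sin (y/2)^3)
      (8 * ((3:ℕ) * Real.sin (x/2)^2 * (Real.cos (x/2) * (1/2)))) x := by
    simpa using ((hhalf.pow 3).const_mul 8)
  have hinv : HasDerivAt (fun y : ℝ => 1 - 1 / (8 * Real.sin (y/2)^3))
      (0 - (0 * (8 * Real.sin (x/2)^3) - 1 * (8 * ((3:ℕ) * Real.sin (x/2)^2 * (Real.cos (x/2) * (1/2))))) / (8 * Real.sin (x/2)^3)^2) x :=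
    (hasDerivAt_const x (1:ℝ)).sub (((hasDerivAt_const x (1:ℝ)).div hden hs3))
  have hmul := (Real.hasDerivAt_sin x).mul hinv
  refine hmul.congr_deriv ?_
  symm
  have hsinx : Real.sin x = 2 * Real.sin (x/2) * Real.cos (x/2) := by
    have h := Real.sin_two_mul (x/2)
    rw [show (2:ℝ) * (x/2) = x by ring] at h
    linarith
  have hcosx : Real.cos x = 1 - 2 * Real.sin (x/2)^2 := by
    have h := Real.cos_two_mul (x/2)
    rw [show (2:ℝ) * (x/2) = x by ring] at h
    have h2 := Real.sin_sq_add_cos_sq (x/2)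
    linarith
  rw [phi, hsinx, hcosx]
  have h3 : Real.sin (x/2) ≠ 0 := ne_of_gt hs
  field_simp
  linear_combination (-3) * Real.sin_sq_add_cos_sq (x/2)

lemma hasDerivAt_phi {x : ℝ} (h0 : 0 < x) (h2 : x < 2*π) :
    HasDerivAt phi (phi1 x) x := by
  have hs : 0 < Real.sin (x/2) := sin_half_pos h0 h2
  have hs3 : (8 : ℝ) * Real.sin (x/2)^3 ≠ 0 := by positivity
  have hhalf : HasDerivAt (fun y : ℝ => Real.sin (y/2)) (Real.cos (x/2) * (1/2)) x :=
    (Real.hasDerivAt_sin (x/2)).comp (h₂ := Real.sin) x ((hasDerivAt_id x).div_const 2)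
  have hnum : HasDerivAt (fun y : ℝ => 2 - Real.sin (y/2)^2)
      (0 - (2:ℕ) * Real.sin (x/2)^1 * (Real.cos (x/2) * (1/2))) x :=
    (hasDerivAt_const x (2:ℝ)).sub (hhalf.pow 2)
  have hden : HasDerivAt (fun y : ℝ => 8 * Real.sin (y/2)^3)
      (8 * ((3:ℕ) * Real.sin (x/2)^2 * (Real.cos (x/2) * (1/2)))) x := by
    simpa using ((hhalf.pow 3).const_mul 8)
  have hdiv := hnum.div hden hs3
  refine hdiv.congr_deriv ?_
  symm
  rw [phi1]
  have h3 : Real.sin (x/2) ≠ 0 := ne_of_gt hs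
  field_simp
  ring

lemma hasDerivAt_phi1 {x : ℝ} (h0 : 0 < x) (h2 : x < 2*π) :
    HasDerivAt phi1 (phi2 x) x := by
  have hs : 0 < Real.sin (x/2) := sin_half_pos h0 h2
  have hs4 : (16 : ℝ) * Real.sin (x/2)^4 ≠ 0 := by positivity
  have hhalf : HasDerivAt (fun y : ℝ => Real.sin (y/2)) (Real.cos (x/2) * (1/2)) x :=
    (Real.hasDerivAt_sin (x/2)).comp (h₂ := Real.sin) x ((hasDerivAt_id x).div_const 2)
  have hchalf : HasDerivAt (fun y : ℝ => Real.cos (y/2)) (-Real.sin (x/2) * (1/2)) x :=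
    (Real.hasDerivAt_cos (x/2)).comp (h₂ := Real.cos) x ((hasDerivAt_id x).div_const 2)
  have hnum : HasDerivAt (fun y : ℝ => Real.cos (y/2) * (Real.sin (y/2)^2 - 6))
      (-Real.sin (x/2) * (1/2) * (Real.sin (x/2)^2 - 6)
        + Real.cos (x/2) * ((2:ℕ) * Real.sin (x/2)^1 * (Real.cos (x/2) * (1/2)) - 0)) x :=
    hchalf.mul ((hhalf.pow 2).sub (hasDerivAt_const x (6:ℝ)))
  have hden : HasDerivAt (fun y : ℝ => 16 * Real.sin (y/2)^4)
      (16 * ((4:ℕ) * Real.sin (x/2)^3 * (Real.cos (x/2) * (1/2)))) x := by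
    simpa using ((hhalf.pow 4).const_mul 16)
  have hdiv := hnum.div hden hs4
  refine hdiv.congr_deriv ?_
  symm
  rw [phi2]
  have h3 : Real.sin (x/2) ≠ 0 := ne_of_gt hs
  field_simp
  linear_combination (-768 + 64 * Real.sin (x/2)^2) * Real.sin_sq_add_cos_sq (x/2)

lemma phi_strictConvexOn : StrictConvexOn ℝ (Ioo 0 (2*π)) phi := by
  apply strictConvexOn_of_deriv2_pos (convex_Ioo _ _)
  · exact fun x hx => (hasDerivAt_phi hx.1 hx.2).continuousAt.continuousWithinAt
  · intro x hx
    rw [interior_Ioo] at hx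
    show 0 < deriv (deriv phi) x
    have he : deriv phi =ᶠ[nhds x] phi1 := by
      filter_upwards [isOpen_Ioo.mem_nhds hx] with y hy
      exact (hasDerivAt_phi hy.1 hy.2).deriv
    rw [he.deriv_eq, (hasDerivAt_phi1 hx.1 hx.2).deriv]
    have hs : 0 < Real.sin (x/2) := sin_half_pos hx.1 hx.2
    have hs1 : Real.sin (x/2) ≤ 1 := Real.sin_le_one _
    rw [phi2]
    apply div_pos _ (by positivity)
    nlinarith [sq_nonneg (Real.sin (x/2)^2), sq_nonneg (Real.sin (x/2))]

lemma deriv_f_pos {x : ℝ} (h0 : 0 < x) (hx : x ≤ 3*π/5) : 0 < deriv f x := by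
  have hπ := Real.pi_pos
  have h2 : x < 2*π := by linarith
  rw [(hasDerivAt_f h0 h2).deriv]
  have hs : 0 < Real.sin (x/2) := sin_half_pos h0 h2
  set s := Real.sin (x/2) with hsdef
  have hcosx : Real.cos x = 1 - 2 * s^2 := by
    have h := Real.cos_two_mul (x/2)
    rw [show (2:ℝ) * (x/2) = x by ring] at h
    have h2' := Real.sin_sq_add_cos_sq (x/2)
    rw [hsdef]; linarith
  set c : ℝ := (1 + Real.sqrt 5)/4 with hcdef
  have hsqrt5 : Real.sqrt 5 ^ 2 = 5 := Real.sq_sqrt (by norm_num)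
  have hsqrt5pos : 0 < Real.sqrt 5 := Real.sqrt_pos.mpr (by norm_num)
  have hc : 4 * c^2 = 2 * c + 1 := by rw [hcdef]; nlinarith
  have hc0 : 0 < c := by rw [hcdef]; positivity
  have hc56 : c < 5/6 := by
    have h5 : Real.sqrt 5 < 7/3 := by
      nlinarith [hsqrt5, hsqrt5pos]
    rw [hcdef]; linarith
  have hsc : s ≤ c := by
    have hmem1 : x/2 ∈ Icc (-(π/2)) (π/2) := ⟨by linarith, by linarith⟩
    have hmem2 : (3*π/10 : ℝ) ∈ Icc (-(π/2)) (π/2) := ⟨by linarith, by linarith⟩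
    have hmono := Real.strictMonoOn_sin.monotoneOn hmem1 hmem2 (by linarith)
    have : Real.sin (3*π/10) = c := by
      rw [show (3*π/10 : ℝ) = π/2 - π/5 by ring, Real.sin_pi_div_two_sub,
        Real.cos_pi_div_five, hcdef]
    rw [hsdef]; linarith [hmono, this.symm.le]
  have key : 0 < (1 - 2*s^2) * (8*s^3) + (2 - s^2) := by
    have hs2 : s^2 ≤ c^2 := by nlinarith
    have hs3 : s^3 ≤ c^3 := by nlinarith
    nlinarith [mul_pos hs hs, mul_pos (mul_pos hs hs) hs, hc, hc56, hs2, hs3,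
      mul_le_mul_of_nonneg_left hs2 (le_of_lt (mul_pos (mul_pos hs hs) hs))]
  have heq : Real.cos x + phi x = ((1 - 2*s^2) * (8*s^3) + (2 - s^2)) / (8*s^3) := by
    rw [phi, hcosx, ← hsdef]
    field_simp
  rw [heq]
  positivity

theorem stmt7 (θc t1 t2 : ℝ)
    (hθc : θc ∈ Ioo (0:ℝ) π) (hcrit : deriv f θc = 0)
    (huniq : ∀ x ∈ Ioo (0:ℝ) π, deriv f x = 0 → x = θc)
    (h1 : 0 < t1) (h2 : t1 < θc) (h3 : θc < t2) (h4 : t2 < 2*π)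
    (hf : f t1 ≥ f t2) :
    t1 + t2 > 2*θc ∧ 2*θc > 6*π/5 := by
  have hπ := Real.pi_pos
  obtain ⟨hθ0, hθπ⟩ := hθc
  have hθ5 : 3*π/5 < θc := by
    by_contra h
    push_neg at h
    exact absurd hcrit (ne_of_gt (deriv_f_pos hθ0 h))
  refine ⟨?_, by linarith⟩
  have hcosneg : Real.cos θc < 0 :=
    Real.cos_neg_of_pi_div_two_lt_of_lt (by linarith) (by linarith)
  have hθ2π : θc < 2*π := by linarith
  have hphiθ : phi θc = - Real.cos θc := by
    have h := (hasDerivAt_f hθ0 hθ2π).deriv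
    rw [hcrit] at h
    linarith
  -- f strictly monotone on (0, θc]
  have hmono : StrictMonoOn f (Ioc 0 θc) := by
    apply strictMonoOn_of_deriv_pos (convex_Ioc _ _)
    · intro y hy
      exact (hasDerivAt_f hy.1 (by linarith [hy.2])).continuousAt.continuousWithinAt
    · intro y hy
      rw [interior_Ioc] at hy
      obtain ⟨hy0, hyθ⟩ := hy
      by_cases hcase : y ≤ 3*π/5
      · exact deriv_f_pos hy0 hcase
      push_neg at hcase
      rcases lt_trichotomy (deriv f y) 0 with hneg | hzero | hpos
      · exfalso
        have hgc : ContinuousOn (fun z => Real.cos z + phi z) (Icc (3*π/5) y) := by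
          intro z hz
          have hz0 : 0 < z := by linarith [hz.1]
          have hz2 : z < 2*π := by linarith [hz.2]
          exact (Real.continuous_cos.continuousAt.add
            (hasDerivAt_phi hz0 hz2).continuousAt).continuousWithinAt
        have heqon : EqOn (deriv f) (fun z => Real.cos z + phi z) (Icc (3*π/5) y) := by
          intro z hz
          exact (hasDerivAt_f (by linarith [hz.1]) (by linarith [hz.2])).deriv
        have hcont : ContinuousOn (deriv f) (Icc (3*π/5) y) := hgc.congr heqon
        have hivt := intermediate_value_Ioo' (le_of_lt hcase) hcont
        have h0mem : (0:ℝ) ∈ Ioo (deriv f y) (deriv f (3*π/5)) :=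
          ⟨hneg, deriv_f_pos (by linarith) (le_refl _)⟩
        obtain ⟨z, hz, hz0⟩ := hivt h0mem
        have hzθ : z = θc := huniq z ⟨by linarith [hz.1], by linarith [hz.2]⟩ hz0
        linarith [hz.2]
      · exact absurd (huniq y ⟨hy0, by linarith⟩ hzero) (ne_of_lt hyθ)
      · exact hpos
  rcases le_or_gt (2*θc) t2 with hcase | hcase
  · linarith
  -- G(t) = f(θc+t) - f(θc-t) strictly increasing on [0, θc)
  have hGmono : StrictMonoOn (fun t => f (θc + t) - f (θc - t)) (Ico 0 θc) := by
    have hGd : ∀ t ∈ Ico 0 θc, HasDerivAt (fun t => f (θc + t) - f (θc - t))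
        ((Real.cos (θc+t) + phi (θc+t)) * (0+1) - (Real.cos (θc-t) + phi (θc-t)) * (0-1)) t := by
      intro t ht
      obtain ⟨ht0, htθ⟩ := ht
      have hp : HasDerivAt (fun u : ℝ => f (θc + u)) ((Real.cos (θc+t) + phi (θc+t)) * (0+1)) t :=
        (hasDerivAt_f (by linarith) (by linarith)).comp t
          ((hasDerivAt_const t θc).add (hasDerivAt_id t))
      have hm : HasDerivAt (fun u : ℝ => f (θc - u)) ((Real.cos (θc-t) + phi (θc-t)) * (0-1)) t :=
        (hasDerivAt_f (by linarith) (by linarith)).comp t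
          ((hasDerivAt_const t θc).sub (hasDerivAt_id t))
      exact hp.sub hm
    apply strictMonoOn_of_deriv_pos (convex_Ico _ _)
    · exact fun t ht => (hGd t ht).continuousAt.continuousWithinAt
    · intro t ht
      rw [interior_Ico] at ht
      obtain ⟨ht0, htθ⟩ := ht
      rw [(hGd t ⟨le_of_lt ht0, htθ⟩).deriv]
      have hsum : Real.cos (θc+t) + Real.cos (θc-t) = 2 * Real.cos θc * Real.cos t := by
        rw [Real.cos_add, Real.cos_sub]; ring
      have hxmem : θc - t ∈ Ioo 0 (2*π) := ⟨by linarith, by linarith⟩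
      have hymem : θc + t ∈ Ioo 0 (2*π) := ⟨by linarith, by linarith⟩
      have hconv := phi_strictConvexOn.2 hxmem hymem (by intro hh; linarith [hh] : θc - t ≠ θc + t)
        (by norm_num : (0:ℝ) < 1/2) (by norm_num : (0:ℝ) < 1/2) (by norm_num)
      simp only [smul_eq_mul] at hconv
      rw [show (1/2 : ℝ) * (θc - t) + (1/2 : ℝ) * (θc + t) = θc by ring] at hconv
      have hprod : 0 ≤ (-Real.cos θc) * (1 - Real.cos t) :=
        mul_nonneg (by linarith) (by linarith [Real.cos_le_one t])
      nlinarith [hconv, hsum, hphiθ, hprod]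
  have h0mem : (0:ℝ) ∈ Ico 0 θc := ⟨le_refl _, hθ0⟩
  have htmem : t2 - θc ∈ Ico 0 θc := ⟨by linarith, by linarith⟩
  have hGlt := hGmono h0mem htmem (by linarith : (0:ℝ) < t2 - θc)
  simp only at hGlt
  rw [show θc + (t2 - θc) = t2 by ring, show θc - (t2 - θc) = 2*θc - t2 by ring,
    add_zero, sub_zero, sub_self] at hGlt
  -- hGlt : 0 < f t2 - f (2θc - t2)
  by_contra hcon
  push_neg at hcon
  have hmem1 : t1 ∈ Ioc 0 θc := ⟨h1, le_of_lt h2⟩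
  have hmem2 : 2*θc - t2 ∈ Ioc 0 θc := ⟨by linarith, by linarith⟩
  have hle := hmono.monotoneOn hmem1 hmem2 (by linarith)
  linarith
end

section
/- The function l(x) = f(x)/f(π - x) is injective on the interval (2π/3, π), where f(x) = sin(x)·(1 - 1/(8·sin³(x/2))). -/
open Real Set

noncomputable def fd (x : ℝ) : ℝ :=
  Real.cos x * (1 - 1 / (8 * Real.sin (x/2)^3)) +
    Real.sin x * (3 * Real.cos (x/2) / (16 * Real.sin (x/2)^4))

lemma hasDerivAt_f_s10 (x : ℝ) (hs : Real.sin (x/2) ≠ 0) : HasDerivAt f (fd x) x := by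
  have h0 : HasDerivAt (fun y : ℝ => y/2) (1/2 : ℝ) x := by
    simpa using (hasDerivAt_id x).div_const 2
  have h1 : HasDerivAt (fun y => Real.sin (y/2)) (Real.cos (x/2) * (1/2)) x :=
    h0.sin
  have h2 : HasDerivAt (fun y => 8 * Real.sin (y/2)^3)
      (8 * ((3 : ℝ) * Real.sin (x/2)^2 * (Real.cos (x/2) * (1/2)))) x := by
    have := (h1.pow 3).const_mul (8 : ℝ)
    exact this.congr_deriv (by norm_num)
  have hne : 8 * Real.sin (x/2)^3 ≠ 0 :=
    mul_ne_zero (by norm_num) (pow_ne_zero 3 hs)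
  have h3 := (hasDerivAt_const x (1:ℝ)).div h2 hne
  have h4 := h3.const_sub (1:ℝ)
  have h5 := (Real.hasDerivAt_sin x).mul h4
  refine h5.congr_deriv ?_
  unfold fd
  simp only [Pi.div_apply]
  field_simp
  ring

lemma hasDerivAt_l (x : ℝ) (hx : x ∈ Ioo (2*π/3) π) :
    ∃ d : ℝ, HasDerivAt (fun y => f y / f (π - y)) d x ∧ 0 < d := by
  have hπ := Real.pi_pos
  obtain ⟨hx1, hx2⟩ := hx
  have hs0 : 0 < Real.sin (x/2) :=
    Real.sin_pos_of_pos_of_lt_pi (by linarith) (by linarith)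
  have hc0 : 0 < Real.cos (x/2) :=
    Real.cos_pos_of_mem_Ioo ⟨by linarith, by linarith⟩
  have m1 : π/3 ∈ Icc (-(π/2)) (π/2) := ⟨by linarith, by linarith⟩
  have m2 : x/2 ∈ Icc (-(π/2)) (π/2) := ⟨by linarith, by linarith⟩
  have hs3 : Real.sqrt 3 / 2 < Real.sin (x/2) := by
    have := Real.strictMonoOn_sin m1 m2 (by linarith)
    rwa [Real.sin_pi_div_three] at this
  have m3 : π/3 ∈ Icc (0:ℝ) π := ⟨by linarith, by linarith⟩
  have m4 : x/2 ∈ Icc (0:ℝ) π := ⟨by linarith, by linarith⟩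
  have hc3 : Real.cos (x/2) < 1/2 := by
    have := Real.strictAntiOn_cos m3 m4 (by linarith)
    rwa [Real.cos_pi_div_three] at this
  have hsx0 : 0 < Real.sin x := Real.sin_pos_of_pos_of_lt_pi (by linarith) hx2
  have e1 : (π - x)/2 = π/2 - x/2 := by ring
  have hspx : Real.sin ((π - x)/2) = Real.cos (x/2) := by
    rw [e1, Real.sin_pi_div_two_sub]
  have hcpx : Real.cos ((π - x)/2) = Real.sin (x/2) := by
    rw [e1, Real.cos_pi_div_two_sub]
  have hspx' : Real.sin ((π - x)/2) ≠ 0 := by rw [hspx]; exact hc0.ne'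
  -- f (π - x) < 0
  have hc8 : 8 * Real.cos (x/2)^3 < 1 := by
    have h := pow_lt_pow_left₀ hc3 hc0.le (three_ne_zero)
    norm_num at h
    linarith
  have hc8' : (0:ℝ) < 8 * Real.cos (x/2)^3 := by positivity
  have hFneg : f (π - x) < 0 := by
    unfold f
    rw [Real.sin_pi_sub, hspx]
    apply mul_neg_of_pos_of_neg hsx0
    have : 1 < 1 / (8 * Real.cos (x/2)^3) := (one_lt_one_div hc8' hc8)
    linarith
  have hFne : f (π - x) ≠ 0 := hFneg.ne
  have hd1 : HasDerivAt f (fd x) x := hasDerivAt_f_s10 x hs0.ne'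
  have hsub : HasDerivAt (fun y : ℝ => π - y) (-1 : ℝ) x := by
    simpa using (hasDerivAt_id x).const_sub π
  have hcomp : HasDerivAt (fun y => f (π - y)) (fd (π - x) * (-1)) x :=
    (hasDerivAt_f_s10 (π - x) hspx').comp x hsub
  have hdiv := hd1.div hcomp hFne
  refine ⟨_, hdiv, ?_⟩
  have hFsq : 0 < f (π - x)^2 := by positivity
  apply div_pos _ hFsq
  have e2 : Real.sin x = 2 * Real.sin (x/2) * Real.cos (x/2) := by
    rw [← Real.sin_two_mul, show 2*(x/2) = x by ring]
  set s := Real.sin (x/2) with hsdef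
  set c := Real.cos (x/2) with hcdef
  have hpy : s^2 + c^2 = 1 := Real.sin_sq_add_cos_sq (x/2)
  have hkey : fd x * f (π - x) - f x * (fd (π - x) * (-1)) =
      3 * (8*(s^5 + c^5) - (s^2 + c^2)) / (32 * s^2 * c^2) := by
    unfold f fd
    rw [Real.sin_pi_sub, Real.cos_pi_sub, hspx, hcpx, e2, ← hsdef, ← hcdef]
    field_simp
    ring
  rw [hkey, hpy]
  have hs7 : (0.86 : ℝ) < s := by
    have h3 : (1.73 : ℝ) < Real.sqrt 3 := by
      nlinarith [Real.sq_sqrt (by norm_num : (3:ℝ) ≥ 0), Real.sqrt_nonneg 3]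
    linarith
  have h8 : (1:ℝ) < 8 * s^5 := by
    have h := pow_lt_pow_left₀ hs7 (by norm_num) (by norm_num : (5:ℕ) ≠ 0)
    norm_num at h
    linarith
  have hc5 : (0:ℝ) < c^5 := by positivity
  have : (0:ℝ) < 3 * (8*(s^5 + c^5) - 1) := by nlinarith
  positivity

theorem stmt10 : InjOn (fun x => f x / f (π - x)) (Ioo (2*π/3) π) := by
  apply StrictMonoOn.injOn
  apply strictMonoOn_of_deriv_pos (convex_Ioo _ _)
  · intro x hx
    obtain ⟨d, hd, _⟩ := hasDerivAt_l x hx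
    exact hd.continuousAt.continuousWithinAt
  · intro x hx
    rw [interior_Ioo] at hx
    obtain ⟨d, hd, hdpos⟩ := hasDerivAt_l x hx
    rwa [hd.deriv]
end

section
/- The function l(x) = f(x)/f(π - x) is injective on (0, 2π/3), where f(x) = sin(x)·(1 - 1/(8·sin³(x/2))). -/
open Real Set

noncomputable def g' (x : ℝ) : ℝ :=
  (8 - 1/(Real.sin (x/2))^3) / (8 - 1/(Real.cos (x/2))^3)

lemma key_ineq (s c : ℝ) (hs : 0 < s) (hc : 0 < c) (h : s^2 + c^2 = 1) :
    1 < 8*(s^5 + c^5) := by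
  rcases le_total s c with hle | hle
  · have hc1 : c ≤ 1 := by nlinarith
    have hc2 : (1:ℝ)/2 ≤ c^2 := by nlinarith
    nlinarith [pow_pos hs 5, sq_nonneg (c^2 - c), mul_pos hc hc]
  · have hs1 : s ≤ 1 := by nlinarith
    have hs2 : (1:ℝ)/2 ≤ s^2 := by nlinarith
    nlinarith [pow_pos hc 5, sq_nonneg (s^2 - s), mul_pos hs hs]

lemma deriv_algebra (s c : ℝ) (hs : s ≠ 0) (hc : c ≠ 0) (hD : 8 - 1/c^3 ≠ 0) :
    (3/2) * (8*(s^5 + c^5) - (s^2+c^2)) / (s^4 * c^4 * (8 - 1/c^3)^2) =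
    ((0 - (0 * s ^ 3 - 1 * (((3:ℕ):ℝ) * s ^ 2 * (c * (1 / 2)))) / (s ^ 3) ^ 2) * (8 - 1 / c ^ 3) -
        (8 - 1 / s ^ 3) * (0 - (0 * c ^ 3 - 1 * (((3:ℕ):ℝ) * c ^ 2 * (-s * (1 / 2)))) / (c ^ 3) ^ 2)) /
      (8 - 1 / c ^ 3) ^ 2 := by
  have h8 : (8:ℝ)*c^3 - 1 ≠ 0 := by
    intro h
    apply hD
    field_simp
    linarith
  push_cast
  field_simp
  ring

lemma facts {x : ℝ} (hx : x ∈ Ioo 0 (2*π/3)) :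
    0 < Real.sin (x/2) ∧ 1/2 < Real.cos (x/2) ∧ 0 < Real.sin x := by
  obtain ⟨hx1, hx2⟩ := hx
  have hπ : (3:ℝ) < π := Real.pi_gt_three
  have hx3 : x/2 < π/3 := by linarith
  have hs : 0 < Real.sin (x/2) :=
    Real.sin_pos_of_pos_of_lt_pi (by linarith) (by linarith)
  have hc : 1/2 < Real.cos (x/2) := by
    have := Real.cos_lt_cos_of_nonneg_of_le_pi (by linarith : 0 ≤ x/2)
      (by linarith : π/3 ≤ π) hx3
    rwa [Real.cos_pi_div_three] at this
  exact ⟨hs, hc, Real.sin_pos_of_pos_of_lt_pi hx1 (by linarith)⟩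

lemma denom_pos {c : ℝ} (hc : 1/2 < c) : 0 < 8 - 1/c^3 := by
  have hc0 : 0 < c := by linarith
  have h8 : (1/2:ℝ)^3 < c^3 := by
    apply pow_lt_pow_left₀ hc (by norm_num)
    norm_num
  have : 1/c^3 < 8 := by
    rw [div_lt_iff₀ (by positivity)]
    nlinarith
  linarith

lemma g'_deriv {x : ℝ} (hx : x ∈ Ioo 0 (2*π/3)) :
    HasDerivAt g' ((3/2) * (8*(Real.sin (x/2)^5 + Real.cos (x/2)^5) -
        (Real.sin (x/2)^2 + Real.cos (x/2)^2)) /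
      (Real.sin (x/2)^4 * Real.cos (x/2)^4 * (8 - 1/(Real.cos (x/2))^3)^2)) x := by
  obtain ⟨hs, hc, -⟩ := facts hx
  have hc0 : 0 < Real.cos (x/2) := by linarith
  have hsne : Real.sin (x/2) ≠ 0 := ne_of_gt hs
  have hcne : Real.cos (x/2) ≠ 0 := ne_of_gt hc0
  have hDne : (8 - 1/(Real.cos (x/2))^3) ≠ 0 := ne_of_gt (denom_pos hc)
  have h1 : HasDerivAt (fun y => Real.sin (y/2)) (Real.cos (x/2) * (1/2)) x := by
    have := (Real.hasDerivAt_sin (x/2)).comp x ((hasDerivAt_id x).div_const 2)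
    exact this
  have h2 : HasDerivAt (fun y => Real.cos (y/2)) (-Real.sin (x/2) * (1/2)) x := by
    have := (Real.hasDerivAt_cos (x/2)).comp x ((hasDerivAt_id x).div_const 2)
    exact this
  have h3 := h1.pow 3
  have h4 := h2.pow 3
  have h5 := (hasDerivAt_const x (1:ℝ)).div h3 (pow_ne_zero 3 hsne)
  have h6 := (hasDerivAt_const x (1:ℝ)).div h4 (pow_ne_zero 3 hcne)
  have h7 := ((hasDerivAt_const x (8:ℝ)).sub h5).div ((hasDerivAt_const x (8:ℝ)).sub h6) hDne
  refine h7.congr_deriv ?_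
  simpa using (deriv_algebra (Real.sin (x/2)) (Real.cos (x/2)) hsne hcne hDne).symm

lemma g'_mono : StrictMonoOn g' (Ioo 0 (2*π/3)) := by
  apply strictMonoOn_of_deriv_pos (convex_Ioo _ _)
  · intro x hx
    exact (g'_deriv hx).continuousAt.continuousWithinAt
  · intro x hx
    rw [interior_Ioo] at hx
    rw [(g'_deriv hx).deriv]
    obtain ⟨hs, hc, -⟩ := facts hx
    have hc0 : 0 < Real.cos (x/2) := by linarith
    have hpyth : Real.sin (x/2)^2 + Real.cos (x/2)^2 = 1 := Real.sin_sq_add_cos_sq _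
    have hkey := key_ineq _ _ hs hc0 hpyth
    have hD := denom_pos hc
    apply div_pos
    · rw [hpyth]; linarith
    · positivity

lemma l_eq_g' {x : ℝ} (hx : x ∈ Ioo 0 (2*π/3)) : f x / f (π - x) = g' x := by
  obtain ⟨hs, hc, hsx⟩ := facts hx
  have hc0 : 0 < Real.cos (x/2) := by linarith
  have hsne : Real.sin (x/2) ≠ 0 := ne_of_gt hs
  have hcne : Real.cos (x/2) ≠ 0 := ne_of_gt hc0
  have hsxne : Real.sin x ≠ 0 := ne_of_gt hsx
  have h8 : (8:ℝ) * Real.cos (x/2)^3 - 1 ≠ 0 := by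
    have h3 : (1/2:ℝ)^3 < Real.cos (x/2)^3 := by
      apply pow_lt_pow_left₀ hc (by norm_num)
      norm_num
    intro h
    rw [sub_eq_zero] at h
    nlinarith
  have hhalf : (π - x)/2 = π/2 - x/2 := by ring
  unfold f g'
  rw [Real.sin_pi_sub, hhalf, Real.sin_pi_div_two_sub]
  rw [mul_div_mul_left _ _ hsxne]
  field_simp

theorem stmt11 : InjOn (fun x => f x / f (π - x)) (Ioo 0 (2*π/3)) := by
  exact (g'_mono.injOn).congr (fun x hx => (l_eq_g' hx).symm)
end

section
/- Let a > 0 and g(x) = f(x) + a·f(2x) + f(π + x) on (0, π). If a ≤ 3√2/7, then g has exactly one zero in (0, π), namely x = π/2; if a > 3√2/7, then g has exactly three zeros in (0, π), of the form θ*, π/2, π - θ* with θ* ∈ (π/6, π/2). -/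
open Real Set

lemma alg (a s c : ℝ) (hs : 0 < s) (hc : 0 < c) (hpy : s^2+c^2 = 1) :
    (2*s*c*(1 - 1/(8*s^3)) + a*(2*(2*s*c)*(c^2-s^2)*(1 - 1/(8*(2*s*c)^3))) + (-(2*s*c))*(1 - 1/(8*c^3))) * (2*s*c)^2
    = (c-s)*(a/4*(c+s)*(64*(s*c)^3-1) - (1+s*c)) := by
  have h1 : s ≠ 0 := ne_of_gt hs
  have h2 : c ≠ 0 := ne_of_gt hc
  field_simp
  ring_nf
  linear_combination (32*(s-c)) * hpy

noncomputable def F (a p : ℝ) : ℝ := a/4 * Real.sqrt (1+2*p) * (64*p^3 - 1) - (1+p)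

lemma key (a : ℝ) {x : ℝ} (hx0 : 0 < x) (hxp : x < π) :
    (f x + a * f (2*x) + f (π + x)) * (Real.sin x)^2
      = (Real.cos (x/2) - Real.sin (x/2)) * F a (Real.sin x / 2) := by
  have hs : 0 < Real.sin (x/2) := Real.sin_pos_of_pos_of_lt_pi (by linarith) (by linarith [Real.pi_pos])
  have hc : 0 < Real.cos (x/2) := Real.cos_pos_of_mem_Ioo ⟨by linarith [Real.pi_pos], by linarith⟩
  have hpy : Real.sin (x/2)^2 + Real.cos (x/2)^2 = 1 := Real.sin_sq_add_cos_sq _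
  set s := Real.sin (x/2) with hsdef
  set c := Real.cos (x/2) with hcdef
  have hsinx : Real.sin x = 2*s*c := by
    rw [hsdef, hcdef, show x = 2*(x/2) by ring, Real.sin_two_mul]; ring_nf
  have hcosx : Real.cos x = c^2 - s^2 := by
    rw [hsdef, hcdef, show x = 2*(x/2) by ring, Real.cos_two_mul']; ring_nf
  have e1 : f x = 2*s*c*(1 - 1/(8*s^3)) := by rw [f, hsinx]
  have e2 : f (2*x) = 2*(2*s*c)*(c^2-s^2)*(1 - 1/(8*(2*s*c)^3)) := by
    rw [f, show (2*x)/2 = x by ring, Real.sin_two_mul, hsinx, hcosx]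
  have e3 : f (π + x) = (-(2*s*c))*(1 - 1/(8*c^3)) := by
    have h1 : Real.sin (π + x) = -Real.sin x := by
      rw [Real.sin_add]; simp
    have h2 : Real.sin ((π + x)/2) = c := by
      rw [show (π+x)/2 = π/2 + x/2 by ring, Real.sin_add]; simp [hcdef]
    rw [f, h1, h2, hsinx]
  have hsqrt : Real.sqrt (1 + 2*(Real.sin x/2)) = c + s := by
    rw [hsinx, show 1 + 2*(2*s*c/2) = (c+s)^2 by linarith [hpy]; ]
    exact Real.sqrt_sq (by positivity)
  have hF : F a (Real.sin x / 2) = a/4*(c+s)*(64*(s*c)^3-1) - (1+s*c) := by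
    rw [F, hsqrt, hsinx]; ring
  rw [e1, e2, e3, hF, hsinx]
  exact alg a s c hs hc hpy

lemma F_cont (a : ℝ) : Continuous (F a) := by
  unfold F; fun_prop

lemma F_neg_small {a p : ℝ} (ha : 0 < a) (hp0 : 0 < p) (hp1 : p ≤ 1/4) : F a p < 0 := by
  have h1 : 64*p^3 - 1 ≤ 0 := by
    have : p^3 ≤ (1/4)^3 := pow_le_pow_left₀ (le_of_lt hp0) hp1 3
    nlinarith
  have h2 : Real.sqrt (1+2*p) ≥ 0 := Real.sqrt_nonneg _
  have : a/4 * Real.sqrt (1+2*p) * (64*p^3-1) ≤ 0 := by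
    apply mul_nonpos_of_nonneg_of_nonpos (by positivity) h1
  unfold F; linarith

lemma F_hasDerivAt (a : ℝ) {p : ℝ} (hp : 0 < 1+2*p) :
    HasDerivAt (F a) (a/4 * ((64*p^3-1)/Real.sqrt (1+2*p) + Real.sqrt (1+2*p) * (192*p^2)) - 1) p := by
  have h1 : HasDerivAt (fun q : ℝ => 1+2*q) 2 p := by
    simpa using ((hasDerivAt_id p).const_mul (2:ℝ)).const_add 1
  have h2 : HasDerivAt Real.sqrt (1/(2*Real.sqrt (1+2*p))) (1+2*p) :=
    Real.hasDerivAt_sqrt (ne_of_gt hp)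
  have h3 : HasDerivAt (fun q : ℝ => Real.sqrt (1+2*q)) (1/(2*Real.sqrt (1+2*p)) * 2) p :=
    h2.comp p h1
  have h4 : HasDerivAt (fun q : ℝ => 64*q^3 - 1) (192*p^2) p := by
    have := ((hasDerivAt_pow 3 p).const_mul (64:ℝ)).sub_const 1
    simpa using this.congr_deriv (by ring)
  have hsq : Real.sqrt (1+2*p) > 0 := Real.sqrt_pos.mpr hp
  have h6 : HasDerivAt (fun x : ℝ => a/4*((Real.sqrt (1+2*x))*(64*x^3-1)) - (1+id x))
      (a/4 * (1/(2*Real.sqrt (1+2*p)) * 2 * (64*p^3-1) + Real.sqrt (1+2*p) * (192*p^2)) - 1) p :=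
    ((h3.mul h4).const_mul (a/4)).sub ((hasDerivAt_id p).const_add 1)
  have h7 : (fun x : ℝ => a/4*((Real.sqrt (1+2*x))*(64*x^3-1)) - (1+id x)) = F a := by
    funext x; simp only [F, id]; ring
  rw [h7] at h6
  convert h6 using 1
  have hne : Real.sqrt (1+2*p) ≠ 0 := ne_of_gt hsq
  field_simp

lemma sqrt2_ge : (1.414:ℝ) ≤ Real.sqrt 2 := by
  nlinarith [Real.sq_sqrt (show (0:ℝ) ≤ 2 by norm_num), Real.sqrt_nonneg 2]

lemma F_strictMono {a : ℝ} (ha : 3 * Real.sqrt 2 / 7 ≤ a) :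
    StrictMonoOn (F a) (Icc (1/4 : ℝ) (1/2)) := by
  apply strictMonoOn_of_deriv_pos (convex_Icc _ _) (F_cont a).continuousOn
  intro p hp
  rw [interior_Icc] at hp
  obtain ⟨hp1, hp2⟩ := hp
  have hpos : 0 < 1+2*p := by linarith
  rw [(F_hasDerivAt a hpos).deriv]
  have hsqp : Real.sqrt (1+2*p) > 0 := Real.sqrt_pos.mpr hpos
  have hsqlb : (1.22:ℝ) ≤ Real.sqrt (1+2*p) := by
    nlinarith [Real.sq_sqrt (le_of_lt hpos), Real.sqrt_nonneg (1+2*p)]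
  have hp3 : (1/4:ℝ)^3 < p^3 := pow_lt_pow_left₀ hp1 (by norm_num) (by norm_num)
  have h1 : (64*p^3-1)/Real.sqrt (1+2*p) ≥ 0 := by
    apply div_nonneg (by nlinarith) (le_of_lt hsqp)
  have ha' : (0.606:ℝ) ≤ a := by nlinarith [sqrt2_ge]
  have ha0 : (0:ℝ) < a := by linarith
  have e1 : (12:ℝ) ≤ 192*p^2 := by nlinarith
  have e2 : (1.22:ℝ)*12 ≤ Real.sqrt (1+2*p) * (192*p^2) :=
    mul_le_mul hsqlb e1 (by norm_num) (by linarith)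
  have e3 : (0.606:ℝ)/4*(1.22*12) ≤ a/4 * (Real.sqrt (1+2*p) * (192*p^2)) :=
    mul_le_mul (by linarith) e2 (by norm_num) (by linarith)
  have h2 : a/4 * (Real.sqrt (1+2*p) * (192*p^2)) > 1 := by nlinarith
  nlinarith [mul_nonneg (by linarith : (0:ℝ) ≤ a/4) h1]

lemma F_quarter (a : ℝ) : F a (1/4) = -(5/4) := by
  unfold F; norm_num

lemma F_half (a : ℝ) : F a (1/2) = 7*Real.sqrt 2*a/4 - 3/2 := by
  unfold F; rw [show (1:ℝ)+2*(1/2) = 2 by norm_num]; ring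

lemma F_neg_of_le {a p : ℝ} (ha0 : 0 < a) (ha : a ≤ 3*Real.sqrt 2/7) (hp0 : 0 < p) (hp1 : p < 1/2) :
    F a p < 0 := by
  rcases le_or_gt p (1/4) with h | h
  · exact F_neg_small ha0 hp0 h
  · set A := 3*Real.sqrt 2/7 with hA
    have hA0 : (0:ℝ) < A := by positivity
    have hmono : F a p ≤ F A p := by
      unfold F
      have h64 : (0:ℝ) ≤ 64*p^3 - 1 := by
        have : (1/4:ℝ)^3 < p^3 := pow_lt_pow_left₀ h (by norm_num) (by norm_num)
        nlinarith
      nlinarith [mul_nonneg (mul_nonneg (sub_nonneg.2 ha) (Real.sqrt_nonneg (1+2*p))) h64]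
    have hFA : F A p < F A (1/2) :=
      F_strictMono (le_refl A) ⟨le_of_lt h, le_of_lt hp1⟩ ⟨by norm_num, le_refl _⟩ hp1
    have hFA2 : F A (1/2) = 0 := by
      rw [F_half]
      have h22 : Real.sqrt 2 * Real.sqrt 2 = 2 := Real.mul_self_sqrt (by norm_num)
      show 7*Real.sqrt 2*(3*Real.sqrt 2/7)/4 - 3/2 = 0
      linear_combination (3/4)*h22
    linarith

lemma cs_eq_iff {x : ℝ} (hx0 : 0 < x) (hxp : x < π) :
    Real.cos (x/2) - Real.sin (x/2) = 0 ↔ x = π/2 := by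
  constructor
  · intro h
    have h1 : Real.cos (x/2) = Real.cos (π/2 - x/2) := by
      rw [Real.cos_pi_div_two_sub]; linarith
    have h2 : x/2 = π/2 - x/2 := by
      apply Real.injOn_cos ⟨by linarith, by linarith [Real.pi_pos]⟩
        ⟨by linarith, by linarith [Real.pi_pos]⟩ h1
    linarith
  · intro h
    subst h
    rw [show π/2/2 = π/4 by ring, Real.cos_pi_div_four, Real.sin_pi_div_four]
    ring

lemma sinx_lt_one {x : ℝ} (hx0 : 0 < x) (hxp : x < π) (hne : x ≠ π/2) : Real.sin x < 1 := by
  have hs : 0 < Real.sin (x/2) := Real.sin_pos_of_pos_of_lt_pi (by linarith) (by linarith [Real.pi_pos])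
  have hc : 0 < Real.cos (x/2) := Real.cos_pos_of_mem_Ioo ⟨by linarith [Real.pi_pos], by linarith⟩
  have hpy : Real.sin (x/2)^2 + Real.cos (x/2)^2 = 1 := Real.sin_sq_add_cos_sq _
  have hsinx : Real.sin x = 2*Real.sin (x/2)*Real.cos (x/2) := by
    rw [show x = 2*(x/2) by ring, Real.sin_two_mul]; ring_nf
  have hcs : Real.cos (x/2) - Real.sin (x/2) ≠ 0 := fun h => hne ((cs_eq_iff hx0 hxp).mp h)
  have : (Real.cos (x/2) - Real.sin (x/2))^2 > 0 := by positivity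
  nlinarith

lemma mem_iff (a : ℝ) {x : ℝ} (hx : x ∈ Ioo (0:ℝ) π) :
    f x + a * f (2*x) + f (π + x) = 0 ↔ (x = π/2 ∨ F a (Real.sin x / 2) = 0) := by
  obtain ⟨hx0, hxp⟩ := hx
  have hsin : 0 < Real.sin x := Real.sin_pos_of_pos_of_lt_pi hx0 hxp
  have hk := key a hx0 hxp
  constructor
  · intro h
    rw [h, zero_mul] at hk
    rcases mul_eq_zero.mp hk.symm with h1 | h2
    · exact Or.inl ((cs_eq_iff hx0 hxp).mp h1)
    · exact Or.inr h2
  · intro h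
    have hz : (Real.cos (x/2) - Real.sin (x/2)) * F a (Real.sin x / 2) = 0 := by
      rcases h with h1 | h2
      · rw [(cs_eq_iff hx0 hxp).mpr h1, zero_mul]
      · rw [h2, mul_zero]
    rw [hz] at hk
    rcases mul_eq_zero.mp hk with h1 | h2
    · exact h1
    · exact absurd h2 (by positivity)

lemma pi_half_mem : π/2 ∈ Ioo (0:ℝ) π :=
  ⟨by linarith [Real.pi_pos], by linarith [Real.pi_pos]⟩

theorem stmt16 (a : ℝ) (ha : 0 < a) :
    let g : ℝ → ℝ := fun x => f x + a * f (2*x) + f (π + x)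
    (a ≤ 3 * Real.sqrt 2 / 7 → {x ∈ Ioo (0:ℝ) π | g x = 0} = {π/2}) ∧
    (a > 3 * Real.sqrt 2 / 7 → ∃ θ ∈ Ioo (π/6) (π/2),
      {x ∈ Ioo (0:ℝ) π | g x = 0} = {θ, π/2, π - θ}) := by
  intro g
  have hg : ∀ x, g x = f x + a * f (2*x) + f (π + x) := fun _ => rfl
  constructor
  · -- case a ≤ A
    intro hA
    ext x
    simp only [mem_setOf_eq, mem_singleton_iff]
    constructor
    · rintro ⟨hx, hgx⟩
      rw [hg] at hgx
      rcases (mem_iff a hx).mp hgx with h1 | h2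
      · exact h1
      · by_contra hne
        have hsin : 0 < Real.sin x := Real.sin_pos_of_pos_of_lt_pi hx.1 hx.2
        have hlt : Real.sin x < 1 := sinx_lt_one hx.1 hx.2 hne
        exact absurd h2 (ne_of_lt (F_neg_of_le ha hA (by linarith) (by linarith)))
    · intro hx
      subst hx
      exact ⟨pi_half_mem, by rw [hg]; exact (mem_iff a pi_half_mem).mpr (Or.inl rfl)⟩
  · -- case a > A
    intro hA
    have h14 : F a (1/4) < 0 := by rw [F_quarter]; norm_num
    have hs2 : Real.sqrt 2 * Real.sqrt 2 = 2 := Real.mul_self_sqrt (by norm_num)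
    have h12 : 0 < F a (1/2) := by
      rw [F_half]
      nlinarith [sqrt2_ge]
    obtain ⟨q, hqI, hq0⟩ := intermediate_value_Ioo (by norm_num : (1/4:ℝ) ≤ 1/2)
      (F_cont a).continuousOn (⟨h14, h12⟩ : (0:ℝ) ∈ Ioo (F a (1/4)) (F a (1/2)))
    obtain ⟨hq1, hq2⟩ := hqI
    set θ := Real.arcsin (2*q) with hθdef
    have hsinθ : Real.sin θ = 2*q := Real.sin_arcsin (by linarith) (by linarith)
    have hθmem : θ ∈ Icc (-(π/2)) (π/2) := ⟨Real.neg_pi_div_two_le_arcsin _, Real.arcsin_le_pi_div_two _⟩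
    have hθlt : θ < π/2 := by
      rcases lt_or_eq_of_le hθmem.2 with h | h
      · exact h
      · rw [h] at hsinθ; rw [Real.sin_pi_div_two] at hsinθ; linarith
    have hθgt : π/6 < θ := by
      by_contra h'
      push_neg at h'
      have : Real.sin θ ≤ Real.sin (π/6) :=
        Real.strictMonoOn_sin.monotoneOn hθmem
          ⟨by linarith [Real.pi_pos], by linarith [Real.pi_pos]⟩ h'
      rw [Real.sin_pi_div_six, hsinθ] at this
      linarith
    have hθpos : 0 < θ := by linarith [Real.pi_pos]
    have hθmemIoo : θ ∈ Ioo (0:ℝ) π := ⟨hθpos, by linarith [Real.pi_pos]⟩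
    have hπθmem : π - θ ∈ Ioo (0:ℝ) π := ⟨by linarith [Real.pi_pos], by linarith⟩
    refine ⟨θ, ⟨hθgt, hθlt⟩, ?_⟩
    ext x
    simp only [mem_setOf_eq, mem_insert_iff, mem_singleton_iff]
    constructor
    · rintro ⟨hx, hgx⟩
      rw [hg] at hgx
      by_cases hne : x = π/2
      · exact Or.inr (Or.inl hne)
      rcases (mem_iff a hx).mp hgx with h1 | h2
      · exact Or.inr (Or.inl h1)
      · -- F a (sin x / 2) = 0, x ≠ π/2
        have hsin : 0 < Real.sin x := Real.sin_pos_of_pos_of_lt_pi hx.1 hx.2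
        have hlt : Real.sin x < 1 := sinx_lt_one hx.1 hx.2 hne
        have hp4 : 1/4 < Real.sin x / 2 := by
          by_contra h'
          push_neg at h'
          exact absurd h2 (ne_of_lt (F_neg_small ha (by linarith) h'))
        have hpq : Real.sin x / 2 = q := by
          apply (F_strictMono (le_of_lt hA)).injOn
            ⟨le_of_lt hp4, by linarith⟩ ⟨le_of_lt hq1, le_of_lt hq2⟩
          rw [h2, hq0]
        have hsx : Real.sin x = Real.sin θ := by rw [hsinθ]; linarith
        obtain ⟨hx1, hx2⟩ := hx
        rcases le_or_gt x (π/2) with hle | hgt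
        · left
          exact Real.injOn_sin ⟨by linarith [Real.pi_pos], hle⟩
            ⟨by linarith [Real.pi_pos], le_of_lt hθlt⟩ hsx
        · right; right
          have hsx2 : Real.sin (π - x) = Real.sin θ := by rw [Real.sin_pi_sub]; exact hsx
          have : π - x = θ := Real.injOn_sin
            ⟨by linarith [Real.pi_pos], by linarith⟩
            ⟨by linarith [Real.pi_pos], le_of_lt hθlt⟩ hsx2
          linarith
    · intro hx
      rcases hx with h | h | h
      · subst h
        refine ⟨hθmemIoo, ?_⟩
        rw [hg]
        apply (mem_iff a hθmemIoo).mpr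
        right
        rw [hsinθ]
        convert hq0 using 2
        ring
      · subst h
        exact ⟨pi_half_mem, by rw [hg]; exact (mem_iff a pi_half_mem).mpr (Or.inl rfl)⟩
      · subst h
        refine ⟨hπθmem, ?_⟩
        rw [hg]
        apply (mem_iff a hπθmem).mpr
        right
        rw [Real.sin_pi_sub, hsinθ]
        convert hq0 using 2
        ring
end
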